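/- Let F be a translation limit fractal with p_n ≥ 2 similarities of common ratio λ_n at stage n, sup_n p_n < ∞, satisfying the open set condition with a regular open set V. Then the Hausdorff dimension of F equals liminf_{n→∞} (log P_n)/(log 1/Λ_n), where P_n = ∏_{i=1}^n p_i and Λ_n = ∏_{i=1}^n λ_i. -/

import Mathlib

open Filter MeasureTheory Set

/-- Composition of the maps `w (k, σ k)` along a word `σ` of length `n`. -/
def compWord {X : Type*} (w : ℕ → ℕ → X → X) : (n : ℕ) → (Fin n → ℕ) → X → X
  | 0, _, x => x
  | n + 1, σ, x => compWord w n (fun k => σ k.castSucc) (w n (σ (Fin.last n)) x)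

/-- The limit fractal determined by the contractions `w n j`, `j < p n`,
as the intersection of the successive images of the compact set `C`. -/
def limitSet {X : Type*} (w : ℕ → ℕ → X → X) (p : ℕ → ℕ) (C : Set X) : Set X :=
  ⋂ n, ⋃ (σ : Fin n → ℕ) (_ : ∀ k, σ k < p k), compWord w n σ '' C

namespace S6

open scoped ENNReal NNReal

noncomputable section

attribute [local instance 10] Classical.propDecidable

abbrev Euc (N : ℕ) := EuclideanSpace ℝ (Fin N)

def Lam (lam : ℕ → ℝ) (n : ℕ) : ℝ := ∏ i ∈ Finset.range n, lam i

variable {N : ℕ} {w : ℕ → ℕ → Euc N → Euc N} {p : ℕ → ℕ} {lam : ℕ → ℝ}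

lemma Lam_pos (hlam : ∀ n, lam n ∈ Set.Ioo (0:ℝ) 1) (n : ℕ) : 0 < Lam lam n :=
  Finset.prod_pos fun i _ => (hlam i).1

lemma Lam_succ (lam : ℕ → ℝ) (n : ℕ) : Lam lam (n+1) = Lam lam n * lam n :=
  Finset.prod_range_succ _ _

lemma Lam_le_one (hlam : ∀ n, lam n ∈ Set.Ioo (0:ℝ) 1) (n : ℕ) : Lam lam n ≤ 1 :=
  Finset.prod_le_one (fun i _ => (hlam i).1.le) (fun i _ => (hlam i).2.le)

lemma Lam_anti (hlam : ∀ n, lam n ∈ Set.Ioo (0:ℝ) 1) {m n : ℕ} (h : m ≤ n) :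
    Lam lam n ≤ Lam lam m := by
  induction n with
  | zero => simpa [Nat.le_zero.1 h] using le_refl (Lam lam 0)
  | succ n ih =>
    rcases Nat.lt_or_ge m (n+1) with h' | h'
    · have := ih (Nat.lt_succ_iff.1 h')
      rw [Lam_succ]
      nlinarith [Lam_pos hlam n, (hlam n).1, (hlam n).2, Lam_pos hlam m]
    · have : m = n + 1 := le_antisymm h h'
      simp [this]

lemma Lam_le_pow {c : ℝ} (hlam : ∀ n, lam n ∈ Set.Ioo (0:ℝ) 1) (hc : ∀ n, lam n ≤ c) (n : ℕ) :
    Lam lam n ≤ c ^ n := by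
  induction n with
  | zero => simp [Lam]
  | succ n ih =>
    rw [Lam_succ, pow_succ]
    have h1 : (0:ℝ) < Lam lam n := Lam_pos hlam n
    have h2 : (0:ℝ) < lam n := (hlam n).1
    nlinarith [hc n, pow_nonneg (le_trans h2.le (hc n)) n]

lemma Lam_tendsto (hlam : ∀ n, lam n ∈ Set.Ioo (0:ℝ) 1) {c : ℝ} (hc1 : c < 1)
    (hc : ∀ n, lam n ≤ c) : Tendsto (Lam lam) atTop (nhds 0) := by
  have hc0 : 0 < c := lt_of_lt_of_le (hlam 0).1 (hc 0)
  have h := tendsto_pow_atTop_nhds_zero_of_lt_one hc0.le hc1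
  refine squeeze_zero (fun n => (Lam_pos hlam n).le) (fun n => Lam_le_pow hlam hc n) h

lemma compWord_dist (hsim : ∀ n i, i < p n → ∀ a b : Euc N,
      dist (w n i a) (w n i b) = lam n * dist a b) (n : ℕ) :
    ∀ (σ : Fin n → ℕ), (∀ k, σ k < p ↑k) → ∀ a b,
      dist (compWord w n σ a) (compWord w n σ b) = Lam lam n * dist a b := by
  induction n with
  | zero => intro σ _ a b; simp [compWord, Lam]
  | succ n ih =>
    intro σ hσ a b
    have h1 := ih (fun k => σ k.castSucc) (fun k => hσ k.castSucc)
    show dist (compWord w n _ (w n (σ (Fin.last n)) a)) (compWord w n _ (w n (σ (Fin.last n)) b)) = _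
    rw [h1, hsim n _ (hσ (Fin.last n)) a b, Lam_succ]; ring

lemma compWord_injective (hsim : ∀ n i, i < p n → ∀ a b : Euc N,
      dist (w n i a) (w n i b) = lam n * dist a b)
    (hlam : ∀ n, lam n ∈ Set.Ioo (0:ℝ) 1) (n : ℕ) (σ : Fin n → ℕ) (hσ : ∀ k, σ k < p ↑k) :
    Function.Injective (compWord w n σ) := by
  intro a b hab
  have := compWord_dist hsim n σ hσ a b
  rw [hab, dist_self] at this
  have h0 : dist a b = 0 := by
    have := this.symm
    have hpos := Lam_pos hlam n
    nlinarith [dist_nonneg (x := a) (y := b)]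
  exact dist_eq_zero.1 h0

lemma compWord_lipschitz (hsim : ∀ n i, i < p n → ∀ a b : Euc N,
      dist (w n i a) (w n i b) = lam n * dist a b)
    (hlam : ∀ n, lam n ∈ Set.Ioo (0:ℝ) 1) (n : ℕ) (σ : Fin n → ℕ) (hσ : ∀ k, σ k < p ↑k) :
    LipschitzWith (Lam lam n).toNNReal (compWord w n σ) := by
  apply LipschitzWith.of_dist_le_mul
  intro a b
  rw [compWord_dist hsim n σ hσ a b, Real.coe_toNNReal _ (Lam_pos hlam n).le]

lemma compWord_maps {S : Set (Euc N)} (hS : ∀ n i, i < p n → w n i '' S ⊆ S) (n : ℕ) :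
    ∀ (σ : Fin n → ℕ), (∀ k, σ k < p ↑k) → ∀ x ∈ S, compWord w n σ x ∈ S := by
  induction n with
  | zero => intro σ _ x hx; exact hx
  | succ n ih =>
    intro σ hσ x hx
    exact ih (fun k => σ k.castSucc) (fun k => hσ k.castSucc) _
      (hS n _ (hσ (Fin.last n)) ⟨x, hx, rfl⟩)

lemma compWord_mem_of_le {S : Set (Euc N)} (hS : ∀ n i, i < p n → w n i '' S ⊆ S)
    {n : ℕ} : ∀ {m : ℕ} (h : n ≤ m) (σ : Fin m → ℕ), (∀ k, σ k < p ↑k) → ∀ {x}, x ∈ S →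
    ∃ t ∈ S, compWord w m σ x = compWord w n (fun k => σ (Fin.castLE h k)) t := by
  intro m
  induction m with
  | zero =>
    intro h σ hσ x hx
    have hn : n = 0 := Nat.le_zero.1 h
    subst hn
    exact ⟨x, hx, rfl⟩
  | succ m ih =>
    intro h σ hσ x hx
    rcases Nat.lt_or_ge n (m+1) with h' | h'
    · have hnm : n ≤ m := Nat.lt_succ_iff.1 h'
      have hx' : w m (σ (Fin.last m)) x ∈ S := hS m _ (hσ (Fin.last m)) ⟨x, hx, rfl⟩
      obtain ⟨t, htS, ht⟩ := ih hnm (fun k => σ k.castSucc) (fun k => hσ k.castSucc) hx'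
      refine ⟨t, htS, ?_⟩
      show compWord w m (fun k => σ k.castSucc) (w m (σ (Fin.last m)) x) = _
      rw [ht]
      congr 1
    · have : n = m + 1 := le_antisymm h h'
      subst this
      refine ⟨x, hx, ?_⟩
      congr 1

lemma compWord_image_succ (n : ℕ) (σ : Fin (n+1) → ℕ) (S : Set (Euc N)) :
    compWord w (n+1) σ '' S =
      compWord w n (fun k => σ k.castSucc) '' (w n (σ (Fin.last n)) '' S) := by
  rw [Set.image_image]; rfl

lemma compWord_disjoint {V : Set (Euc N)}
    (hsim : ∀ n i, i < p n → ∀ a b : Euc N, dist (w n i a) (w n i b) = lam n * dist a b)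
    (hlam : ∀ n, lam n ∈ Set.Ioo (0:ℝ) 1)
    (hmaps : ∀ n i, i < p n → w n i '' V ⊆ V)
    (hdisj : ∀ n i j, i < p n → j < p n → i ≠ j → Disjoint (w n i '' V) (w n j '' V))
    (n : ℕ) : ∀ (σ τ : Fin n → ℕ), (∀ k, σ k < p ↑k) → (∀ k, τ k < p ↑k) → σ ≠ τ →
      Disjoint (compWord w n σ '' V) (compWord w n τ '' V) := by
  induction n with
  | zero => intro σ τ _ _ hne; exact absurd (funext fun k => k.elim0) hne
  | succ n ih =>
    intro σ τ hσ hτ hne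
    by_cases hinit : (fun k : Fin n => σ k.castSucc) = (fun k : Fin n => τ k.castSucc)
    · have hlast : σ (Fin.last n) ≠ τ (Fin.last n) := by
        intro hl
        apply hne
        funext k
        induction k using Fin.lastCases with
        | last => exact hl
        | cast j => exact congrFun hinit j
      rw [compWord_image_succ, compWord_image_succ, hinit]
      have hinj := compWord_injective hsim hlam n (fun k => τ k.castSucc)
        (fun k => hτ k.castSucc)
      exact Set.disjoint_image_of_injective hinj
        (hdisj n _ _ (hσ (Fin.last n)) (hτ (Fin.last n)) hlast)
    · rw [compWord_image_succ, compWord_image_succ]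
      have h1 : w n (σ (Fin.last n)) '' V ⊆ V := hmaps n _ (hσ (Fin.last n))
      have h2 : w n (τ (Fin.last n)) '' V ⊆ V := hmaps n _ (hτ (Fin.last n))
      exact (ih _ _ (fun k => hσ k.castSucc) (fun k => hτ k.castSucc) hinit).mono
        (Set.image_mono h1) (Set.image_mono h2)

lemma ball_subset_image_of_dist_eq {r : ℝ} (hr : 0 < r) {f : Euc N → Euc N}
    (hf : ∀ a b, dist (f a) (f b) = r * dist a b) (x : Euc N) (t : ℝ) :
    Metric.ball (f x) (r * t) ⊆ f '' Metric.ball x t := by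
  intro y hy
  set g : Euc N → Euc N := fun z => r⁻¹ • f z with hg
  have hgiso : Isometry g := Isometry.of_dist_eq (fun a b => by
    simp only [hg, dist_smul₀, hf a b, norm_inv, Real.norm_eq_abs, abs_of_pos hr]
    field_simp)
  set A := hgiso.affineIsometryOfStrictConvexSpace with hA
  have hAz : ∀ z, A z = g z := fun z => rfl
  have hsurj : Function.Surjective A.linearIsometry.toLinearMap :=
    (LinearMap.injective_iff_surjective).1 A.linearIsometry.injective
  obtain ⟨v, hv⟩ := hsurj (r⁻¹ • y - g x)
  have hgvx : g (v + x) = r⁻¹ • y := by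
    have h1 : A (v +ᵥ x) = A.linearIsometry v +ᵥ A x := A.map_vadd x v
    have h2 : A.linearIsometry v = r⁻¹ • y - g x := hv
    have := h1
    rw [h2] at this
    have h3 : g (v + x) = (r⁻¹ • y - g x) + g x := by
      simpa [hAz] using this
    rw [h3]; abel
  have hfvx : f (v + x) = y := by
    have : r • g (v + x) = r • (r⁻¹ • y) := by rw [hgvx]
    rw [hg] at this
    simp only [smul_smul, mul_inv_cancel₀ hr.ne', one_smul] at this
    exact this
  refine ⟨v + x, ?_, hfvx⟩
  have hnv : ‖v‖ = ‖A.linearIsometry v‖ := (A.linearIsometry.norm_map v).symm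
  have hd : dist (v + x) x = ‖v‖ := by
    rw [dist_eq_norm]; congr 1; abel
  have hvy : ‖A.linearIsometry v‖ = r⁻¹ * dist y (f x) := by
    rw [show (A.linearIsometry v : Euc N) = A.linearIsometry.toLinearMap v from rfl, hv]
    have : r⁻¹ • y - g x = r⁻¹ • (y - f x) := by rw [hg]; simp [smul_sub]
    rw [this, norm_smul, norm_inv, Real.norm_eq_abs, abs_of_pos hr, dist_eq_norm]
  have : dist (v + x) x < t := by
    rw [hd, hnv, hvy]
    have := (mul_lt_mul_iff_right₀ (inv_pos.2 hr)).2 (Metric.mem_ball.1 hy)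
    calc r⁻¹ * dist y (f x) < r⁻¹ * (r * t) := by
          rw [mul_comm r t] at this ⊢
          exact (mul_lt_mul_iff_right₀ (inv_pos.2 hr)).2 (by rw [mul_comm]; exact Metric.mem_ball.1 hy)
      _ = t := by field_simp
  exact Metric.mem_ball.2 this
def Pr (p : ℕ → ℕ) (n : ℕ) : ℕ := ∏ i ∈ Finset.range n, p i

def aFl (p : ℕ → ℕ) (x : ℝ) (k : ℕ) : ℤ := ⌊x * (Pr p k : ℝ)⌋

def dig (p : ℕ → ℕ) (x : ℝ) (k : ℕ) : ℕ := (aFl p x (k+1) - p k * aFl p x k).toNat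

def wordVal (p : ℕ → ℕ) : (n : ℕ) → (Fin n → ℕ) → ℕ
  | 0, _ => 0
  | n+1, σ => p n * wordVal p n (fun k => σ k.castSucc) + σ (Fin.last n)


lemma Pr_pos (hp : ∀ n, 2 ≤ p n) (n : ℕ) : 0 < Pr p n :=
  Finset.prod_pos fun i _ => lt_of_lt_of_le two_pos (hp i)

lemma Pr_succ (p : ℕ → ℕ) (n : ℕ) : Pr p (n+1) = Pr p n * p n :=
  Finset.prod_range_succ _ _

lemma aFl_zero {x : ℝ} (hx : x ∈ Set.Ico (0:ℝ) 1) : aFl p x 0 = 0 := by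
  simp only [aFl, Pr, Finset.range_zero, Finset.prod_empty, Nat.cast_one, mul_one]
  exact Int.floor_eq_zero_iff.2 (by exact ⟨hx.1, hx.2⟩)

lemma aFl_nonneg {x : ℝ} (hx : 0 ≤ x) (k : ℕ) : 0 ≤ aFl p x k :=
  Int.floor_nonneg.2 (mul_nonneg hx (Nat.cast_nonneg _))

lemma aFl_key1 {x : ℝ} (hx : 0 ≤ x) (k : ℕ) :
    (p k : ℤ) * aFl p x k ≤ aFl p x (k+1) := by
  have hPr : x * (Pr p (k+1) : ℝ) = (x * (Pr p k : ℝ)) * (p k : ℝ) := by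
    rw [Pr_succ]; push_cast; ring
  simp only [aFl, hPr]
  apply Int.le_floor.2
  push_cast
  rw [mul_comm ((p k : ℝ)) _]
  exact mul_le_mul_of_nonneg_right (Int.floor_le _) (Nat.cast_nonneg _)

lemma aFl_key2 (hp : ∀ n, 2 ≤ p n) {x : ℝ} (hx : 0 ≤ x) (k : ℕ) :
    aFl p x (k+1) < (p k : ℤ) * (aFl p x k + 1) := by
  have hPr : x * (Pr p (k+1) : ℝ) = (x * (Pr p k : ℝ)) * (p k : ℝ) := by
    rw [Pr_succ]; push_cast; ring
  have hp0 : (0:ℝ) < (p k : ℝ) := by exact_mod_cast lt_of_lt_of_le two_pos (hp k)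
  simp only [aFl, hPr]
  apply Int.floor_lt.2
  push_cast
  calc x * (Pr p k : ℝ) * (p k : ℝ) < ((⌊x * (Pr p k : ℝ)⌋ : ℝ) + 1) * (p k : ℝ) :=
        mul_lt_mul_of_pos_right (Int.lt_floor_add_one _) hp0
    _ = (p k : ℝ) * ((⌊x * (Pr p k : ℝ)⌋ : ℝ) + 1) := by ring

lemma aFl_succ_eq {x : ℝ} (hx : 0 ≤ x) (k : ℕ) :
    aFl p x (k+1) = (p k : ℤ) * aFl p x k + (dig p x k : ℤ) := by
  have h1 := aFl_key1 (p := p) hx k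
  simp only [dig]
  rw [Int.toNat_of_nonneg (by linarith)]
  ring

lemma dig_lt (hp : ∀ n, 2 ≤ p n) {x : ℝ} (hx : 0 ≤ x) (k : ℕ) :
    dig p x k < p k := by
  have h1 := aFl_key1 (p := p) hx k
  have h2 := aFl_key2 hp hx k
  have : (dig p x k : ℤ) < (p k : ℤ) := by
    simp only [dig]
    rw [Int.toNat_of_nonneg (by linarith)]
    linarith [h2]
  exact_mod_cast this

lemma aFl_eq_wordVal (hp : ∀ n, 2 ≤ p n) {x : ℝ} (hx : x ∈ Set.Ico (0:ℝ) 1) (n : ℕ) :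
    ∀ (σ : Fin n → ℕ), (∀ k : Fin n, dig p x ↑k = σ k) → aFl p x n = (wordVal p n σ : ℤ) := by
  induction n with
  | zero => intro σ _; simpa [wordVal] using aFl_zero hx
  | succ n ih =>
    intro σ hσ
    have hl := hσ (Fin.last n)
    rw [Fin.val_last] at hl
    rw [aFl_succ_eq hx.1 n, ih (fun k => σ k.castSucc) (fun k => hσ k.castSucc), hl, wordVal]
    push_cast
    ring

lemma digits_subset_Ico (hp : ∀ n, 2 ≤ p n) (n : ℕ) (σ : Fin n → ℕ) :
    {x : ℝ | x ∈ Set.Ico (0:ℝ) 1 ∧ ∀ k : Fin n, dig p x ↑k = σ k} ⊆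
      Set.Ico ((wordVal p n σ : ℝ) / (Pr p n : ℝ)) (((wordVal p n σ : ℝ) + 1) / (Pr p n : ℝ)) := by
  rintro x ⟨hx, hd⟩
  have hv := aFl_eq_wordVal hp hx n σ hd
  have hPr : (0:ℝ) < (Pr p n : ℝ) := by exact_mod_cast Pr_pos hp n
  have hfl : (⌊x * (Pr p n : ℝ)⌋ : ℝ) = (wordVal p n σ : ℝ) := by
    have : aFl p x n = (wordVal p n σ : ℤ) := hv
    simp only [aFl] at this
    exact_mod_cast congrArg (fun z : ℤ => (z : ℝ)) this
  constructor
  · rw [div_le_iff₀ hPr, ← hfl]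
    exact Int.floor_le _
  · rw [lt_div_iff₀ hPr, ← hfl]
    linarith [Int.lt_floor_add_one (x * (Pr p n : ℝ))]

lemma volume_Ico_wordVal (hp : ∀ n, 2 ≤ p n) (n : ℕ) (σ : Fin n → ℕ) :
    volume (Set.Ico ((wordVal p n σ : ℝ) / (Pr p n : ℝ))
      (((wordVal p n σ : ℝ) + 1) / (Pr p n : ℝ))) = ENNReal.ofReal (1 / (Pr p n : ℝ)) := by
  rw [Real.volume_Ico]
  congr 1
  have hPr : (0:ℝ) < (Pr p n : ℝ) := by exact_mod_cast Pr_pos hp n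
  field_simp
  ring

lemma measurable_aFl (k : ℕ) : Measurable fun x : ℝ => aFl p x k :=
  Int.measurable_floor.comp (measurable_id.mul_const _)

lemma measurable_dig (k : ℕ) : Measurable fun x : ℝ => dig p x k := by
  have h : Measurable fun x : ℝ => (aFl p x (k+1), aFl p x k) :=
    (measurable_aFl (k+1)).prodMk (measurable_aFl k)
  exact (Measurable.of_discrete (f := fun z : ℤ × ℤ => (z.1 - p k * z.2).toNat)).comp h

def codeSeq {N : ℕ} (w : ℕ → ℕ → Euc N → Euc N) (p : ℕ → ℕ) (x0 : Euc N) (x : ℝ) (n : ℕ) :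
    Euc N := compWord w n (fun k => dig p x ↑k) x0

def codeMap {N : ℕ} (w : ℕ → ℕ → Euc N → Euc N) (p : ℕ → ℕ) (x0 : Euc N) (x : ℝ) : Euc N :=
  limUnder atTop (codeSeq w p x0 x)

variable {N : ℕ} {w : ℕ → ℕ → Euc N → Euc N} {p : ℕ → ℕ} {lam : ℕ → ℝ} {V : Set (Euc N)}
  {x0 : Euc N} {c : ℝ}

lemma w_continuous (hsim : ∀ n i, i < p n → ∀ a b : Euc N,
      dist (w n i a) (w n i b) = lam n * dist a b)
    (hlam : ∀ n, lam n ∈ Set.Ioo (0:ℝ) 1) {n i : ℕ} (hi : i < p n) : Continuous (w n i) := by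
  refine LipschitzWith.continuous (K := (lam n).toNNReal) ?_
  apply LipschitzWith.of_dist_le_mul
  intro a b
  rw [hsim n i hi a b, Real.coe_toNNReal _ (hlam n).1.le]

lemma hmaps_closure (hsim : ∀ n i, i < p n → ∀ a b : Euc N,
      dist (w n i a) (w n i b) = lam n * dist a b)
    (hlam : ∀ n, lam n ∈ Set.Ioo (0:ℝ) 1)
    (hmaps : ∀ n i, i < p n → w n i '' V ⊆ V) :
    ∀ n i, i < p n → w n i '' closure V ⊆ closure V := fun n i hi =>
  (image_closure_subset_closure_image (w_continuous hsim hlam hi)).trans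
    (closure_mono (hmaps n i hi))

lemma codeSeq_succ (x : ℝ) (n : ℕ) :
    codeSeq w p x0 x (n+1) = compWord w n (fun k => dig p x ↑k) (w n (dig p x n) x0) := by
  show compWord w n (fun k => dig p x ↑(Fin.castSucc k)) (w n (dig p x ↑(Fin.last n)) x0) = _
  rw [Fin.val_last]
  congr 1

lemma codeSeq_dist_succ
    (hsim : ∀ n i, i < p n → ∀ a b : Euc N, dist (w n i a) (w n i b) = lam n * dist a b)
    (hlam : ∀ n, lam n ∈ Set.Ioo (0:ℝ) 1) (hp : ∀ n, 2 ≤ p n)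
    (hVbdd : Bornology.IsBounded V)
    (hmaps : ∀ n i, i < p n → w n i '' V ⊆ V) (hx0 : x0 ∈ V)
    {x : ℝ} (hx : 0 ≤ x) (n : ℕ) :
    dist (codeSeq w p x0 x (n+1)) (codeSeq w p x0 x n) ≤
      Metric.diam (closure V) * Lam lam n := by
  rw [codeSeq_succ]
  rw [show codeSeq w p x0 x n = compWord w n (fun k => dig p x ↑k) x0 from rfl]
  rw [compWord_dist hsim n _ (fun k => dig_lt hp hx _) _ _]
  rw [mul_comm]
  apply mul_le_mul_of_nonneg_right _ (Lam_pos hlam n).le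
  have h1 : w n (dig p x n) x0 ∈ closure V :=
    subset_closure (hmaps n _ (dig_lt hp hx n) ⟨x0, hx0, rfl⟩)
  exact Metric.dist_le_diam_of_mem hVbdd.closure h1 (subset_closure hx0)

lemma codeSeq_cauchy
    (hsim : ∀ n i, i < p n → ∀ a b : Euc N, dist (w n i a) (w n i b) = lam n * dist a b)
    (hlam : ∀ n, lam n ∈ Set.Ioo (0:ℝ) 1) (hp : ∀ n, 2 ≤ p n)
    (hc1 : c < 1) (hc : ∀ n, lam n ≤ c)
    (hVbdd : Bornology.IsBounded V)
    (hmaps : ∀ n i, i < p n → w n i '' V ⊆ V) (hx0 : x0 ∈ V)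
    {x : ℝ} (hx : 0 ≤ x) : CauchySeq (codeSeq w p x0 x) := by
  apply cauchySeq_of_le_geometric c (Metric.diam (closure V)) hc1
  intro n
  rw [dist_comm]
  calc dist (codeSeq w p x0 x (n+1)) (codeSeq w p x0 x n) ≤
      Metric.diam (closure V) * Lam lam n :=
        codeSeq_dist_succ hsim hlam hp hVbdd hmaps hx0 hx n
    _ ≤ Metric.diam (closure V) * c ^ n :=
        mul_le_mul_of_nonneg_left (Lam_le_pow hlam hc n) Metric.diam_nonneg

lemma codeSeq_tendsto
    (hsim : ∀ n i, i < p n → ∀ a b : Euc N, dist (w n i a) (w n i b) = lam n * dist a b)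
    (hlam : ∀ n, lam n ∈ Set.Ioo (0:ℝ) 1) (hp : ∀ n, 2 ≤ p n)
    (hc1 : c < 1) (hc : ∀ n, lam n ≤ c)
    (hVbdd : Bornology.IsBounded V)
    (hmaps : ∀ n i, i < p n → w n i '' V ⊆ V) (hx0 : x0 ∈ V)
    {x : ℝ} (hx : 0 ≤ x) :
    Tendsto (codeSeq w p x0 x) atTop (nhds (codeMap w p x0 x)) :=
  (codeSeq_cauchy hsim hlam hp hc1 hc hVbdd hmaps hx0 hx).tendsto_limUnder

lemma codeMap_mem_cyl
    (hsim : ∀ n i, i < p n → ∀ a b : Euc N, dist (w n i a) (w n i b) = lam n * dist a b)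
    (hlam : ∀ n, lam n ∈ Set.Ioo (0:ℝ) 1) (hp : ∀ n, 2 ≤ p n)
    (hc1 : c < 1) (hc : ∀ n, lam n ≤ c)
    (hVbdd : Bornology.IsBounded V)
    (hmaps : ∀ n i, i < p n → w n i '' V ⊆ V) (hx0 : x0 ∈ V)
    {x : ℝ} (hx : 0 ≤ x) (n : ℕ) :
    codeMap w p x0 x ∈ compWord w n (fun k => dig p x ↑k) '' closure V := by
  have hclosed : IsClosed (compWord w n (fun k => dig p x ↑k) '' closure V) := by
    have hK : IsCompact (closure V) := hVbdd.isCompact_closure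
    refine (hK.image ?_).isClosed
    refine LipschitzWith.continuous (K := (Lam lam n).toNNReal) ?_
    apply LipschitzWith.of_dist_le_mul
    intro a b
    rw [compWord_dist hsim n _ (fun k => dig_lt hp hx _) a b,
      Real.coe_toNNReal _ (Lam_pos hlam n).le]
  refine hclosed.mem_of_tendsto
    (codeSeq_tendsto hsim hlam hp hc1 hc hVbdd hmaps hx0 hx) ?_
  filter_upwards [eventually_ge_atTop n] with m hm
  obtain ⟨t, htV, ht⟩ := compWord_mem_of_le (hmaps_closure hsim hlam hmaps) hm
    (fun k => dig p x ↑k) (fun k => dig_lt hp hx _) (subset_closure hx0)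
  refine ⟨t, htV, ?_⟩
  rw [show codeSeq w p x0 x m = compWord w m (fun k => dig p x ↑k) x0 from rfl, ht]
  congr 1

lemma codeMap_mem_limitSet
    (hsim : ∀ n i, i < p n → ∀ a b : Euc N, dist (w n i a) (w n i b) = lam n * dist a b)
    (hlam : ∀ n, lam n ∈ Set.Ioo (0:ℝ) 1) (hp : ∀ n, 2 ≤ p n)
    (hc1 : c < 1) (hc : ∀ n, lam n ≤ c)
    (hVbdd : Bornology.IsBounded V)
    (hmaps : ∀ n i, i < p n → w n i '' V ⊆ V) (hx0 : x0 ∈ V)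
    {x : ℝ} (hx : 0 ≤ x) :
    codeMap w p x0 x ∈ limitSet w p (closure V) := by
  refine Set.mem_iInter.2 fun n => ?_
  refine Set.mem_iUnion.2 ⟨fun k => dig p x ↑k, Set.mem_iUnion.2 ⟨fun k => dig_lt hp hx _, ?_⟩⟩
  exact codeMap_mem_cyl hsim hlam hp hc1 hc hVbdd hmaps hx0 hx n

lemma measurable_codeSeq (n : ℕ) : Measurable fun x : ℝ => codeSeq w p x0 x n := by
  have h1 : Measurable fun x : ℝ => (fun k : Fin n => dig p x ↑k) :=
    measurable_pi_lambda _ (fun k => measurable_dig _)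
  exact (Measurable.of_discrete (f := fun σ : Fin n → ℕ => compWord w n σ x0)).comp h1

lemma measurable_codeMap
    (hsim : ∀ n i, i < p n → ∀ a b : Euc N, dist (w n i a) (w n i b) = lam n * dist a b)
    (hlam : ∀ n, lam n ∈ Set.Ioo (0:ℝ) 1) (hp : ∀ n, 2 ≤ p n)
    (hc1 : c < 1) (hc : ∀ n, lam n ≤ c)
    (hVbdd : Bornology.IsBounded V)
    (hmaps : ∀ n i, i < p n → w n i '' V ⊆ V) (hx0 : x0 ∈ V) :
    Measurable fun x : ℝ => codeMap w p x0 (max x 0) := by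
  refine measurable_of_tendsto_metrizable
    (f := fun n x => codeSeq w p x0 (max x 0) n) ?_ ?_
  · intro n
    exact (measurable_codeSeq n).comp (measurable_id.max measurable_const)
  · rw [tendsto_pi_nhds]
    intro x
    exact codeSeq_tendsto hsim hlam hp hc1 hc hVbdd hmaps hx0 (le_max_right x 0)



def Wd (p : ℕ → ℕ) (n : ℕ) := (k : Fin n) → Fin (p ↑k)

instance (p : ℕ → ℕ) (n : ℕ) : Fintype (Wd p n) := by unfold Wd; infer_instance

def wdFun {p : ℕ → ℕ} {n : ℕ} (σ : Wd p n) : Fin n → ℕ := fun k => ↑(σ k)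

lemma wdFun_lt {p : ℕ → ℕ} {n : ℕ} (σ : Wd p n) : ∀ k : Fin n, wdFun σ k < p ↑k :=
  fun k => (σ k).isLt

lemma wdFun_injective {p : ℕ → ℕ} {n : ℕ} : Function.Injective (wdFun (p := p) (n := n)) := by
  intro σ τ h
  funext k
  exact Fin.ext (congrFun h k)

lemma card_Wd (p : ℕ → ℕ) (n : ℕ) : Fintype.card (Wd p n) = Pr p n := by
  rw [show Fintype.card (Wd p n) = ∏ k : Fin n, Fintype.card (Fin (p ↑k)) from Fintype.card_pi,
    Pr, ← Fin.prod_univ_eq_prod_range]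
  simp

variable {N : ℕ} {w : ℕ → ℕ → Euc N → Euc N} {p : ℕ → ℕ} {lam : ℕ → ℝ} {V : Set (Euc N)}
  {x0 : Euc N} {c : ℝ}

lemma level_eq
    (n : ℕ) :
    (⋃ (σ : Fin n → ℕ) (_ : ∀ k, σ k < p ↑k), compWord w n σ '' closure V) =
      ⋃ i : Wd p n, compWord w n (wdFun i) '' closure V := by
  apply Set.Subset.antisymm
  · rintro x hx
    obtain ⟨σ, hσ⟩ := Set.mem_iUnion.1 hx
    obtain ⟨hval, hmem⟩ := Set.mem_iUnion.1 hσ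
    exact Set.mem_iUnion.2 ⟨fun k => ⟨σ k, hval k⟩, hmem⟩
  · rintro x hx
    obtain ⟨i, hi⟩ := Set.mem_iUnion.1 hx
    exact Set.mem_iUnion.2 ⟨wdFun i, Set.mem_iUnion.2 ⟨wdFun_lt i, hi⟩⟩

lemma compWord_continuous'
    (hsim : ∀ n i, i < p n → ∀ a b : Euc N, dist (w n i a) (w n i b) = lam n * dist a b)
    (hlam : ∀ n, lam n ∈ Set.Ioo (0:ℝ) 1) (n : ℕ) (σ : Fin n → ℕ) (hσ : ∀ k, σ k < p ↑k) :
    Continuous (compWord w n σ) := by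
  refine LipschitzWith.continuous (K := (Lam lam n).toNNReal) ?_
  apply LipschitzWith.of_dist_le_mul
  intro a b
  rw [compWord_dist hsim n σ hσ a b, Real.coe_toNNReal _ (Lam_pos hlam n).le]

lemma isCompact_cyl
    (hsim : ∀ n i, i < p n → ∀ a b : Euc N, dist (w n i a) (w n i b) = lam n * dist a b)
    (hlam : ∀ n, lam n ∈ Set.Ioo (0:ℝ) 1) (hVbdd : Bornology.IsBounded V)
    (n : ℕ) (σ : Wd p n) : IsCompact (compWord w n (wdFun σ) '' closure V) :=
  hVbdd.isCompact_closure.image (compWord_continuous' hsim hlam n _ (wdFun_lt σ))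

lemma isClosed_limitSet
    (hsim : ∀ n i, i < p n → ∀ a b : Euc N, dist (w n i a) (w n i b) = lam n * dist a b)
    (hlam : ∀ n, lam n ∈ Set.Ioo (0:ℝ) 1) (hVbdd : Bornology.IsBounded V) :
    IsClosed (limitSet w p (closure V)) := by
  refine isClosed_iInter fun n => ?_
  rw [level_eq n]
  exact isClosed_iUnion_of_finite fun i => (isCompact_cyl hsim hlam hVbdd n i).isClosed

/-- The natural measure on the limit set. -/
def natMeasure (w : ℕ → ℕ → Euc N → Euc N) (p : ℕ → ℕ) (x0 : Euc N) : Measure (Euc N) :=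
  Measure.map (fun x : ℝ => codeMap w p x0 (max x 0)) (volume.restrict (Set.Ico (0:ℝ) 1))

lemma natMeasure_limitSet
    (hsim : ∀ n i, i < p n → ∀ a b : Euc N, dist (w n i a) (w n i b) = lam n * dist a b)
    (hlam : ∀ n, lam n ∈ Set.Ioo (0:ℝ) 1) (hp : ∀ n, 2 ≤ p n)
    (hc1 : c < 1) (hc : ∀ n, lam n ≤ c)
    (hVbdd : Bornology.IsBounded V)
    (hmaps : ∀ n i, i < p n → w n i '' V ⊆ V) (hx0 : x0 ∈ V) :
    natMeasure w p x0 (limitSet w p (closure V)) = 1 := by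
  rw [natMeasure, Measure.map_apply (measurable_codeMap hsim hlam hp hc1 hc hVbdd hmaps hx0)
    (isClosed_limitSet hsim hlam hVbdd).measurableSet,
    Measure.restrict_apply' measurableSet_Ico]
  have hsub : ((fun x : ℝ => codeMap w p x0 (max x 0)) ⁻¹' limitSet w p (closure V)) ∩
      Set.Ico (0:ℝ) 1 = Set.Ico (0:ℝ) 1 := by
    apply Set.inter_eq_self_of_subset_right
    intro x hx
    exact codeMap_mem_limitSet hsim hlam hp hc1 hc hVbdd hmaps hx0 (le_max_right x 0)
  rw [hsub, Real.volume_Ico]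
  norm_num

lemma natMeasure_le_card
    (hsim : ∀ n i, i < p n → ∀ a b : Euc N, dist (w n i a) (w n i b) = lam n * dist a b)
    (hlam : ∀ n, lam n ∈ Set.Ioo (0:ℝ) 1) (hp : ∀ n, 2 ≤ p n)
    (hc1 : c < 1) (hc : ∀ n, lam n ≤ c)
    (hVbdd : Bornology.IsBounded V)
    (hmaps : ∀ n i, i < p n → w n i '' V ⊆ V) (hx0 : x0 ∈ V)
    {B : Set (Euc N)} (hB : MeasurableSet B) (n : ℕ) :
    natMeasure w p x0 B ≤
      ((Finset.univ.filter (fun σ : Wd p n =>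
        (compWord w n (wdFun σ) '' closure V ∩ B).Nonempty)).card : ℝ≥0∞) *
        ENNReal.ofReal (1 / (Pr p n : ℝ)) := by
  set S := Finset.univ.filter (fun σ : Wd p n =>
    (compWord w n (wdFun σ) '' closure V ∩ B).Nonempty) with hS
  rw [natMeasure, Measure.map_apply (measurable_codeMap hsim hlam hp hc1 hc hVbdd hmaps hx0) hB,
    Measure.restrict_apply' measurableSet_Ico]
  have hsub : ((fun x : ℝ => codeMap w p x0 (max x 0)) ⁻¹' B) ∩ Set.Ico (0:ℝ) 1 ⊆
      ⋃ σ ∈ S, Set.Ico ((wordVal p n (wdFun σ) : ℝ) / (Pr p n : ℝ))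
        (((wordVal p n (wdFun σ) : ℝ) + 1) / (Pr p n : ℝ)) := by
    rintro x ⟨hxB, hxI⟩
    have hx0' : 0 ≤ x := hxI.1
    have hmax : max x 0 = x := max_eq_left hx0'
    rw [Set.mem_preimage, hmax] at hxB
    set σx : Wd p n := fun k => ⟨dig p x ↑k, dig_lt hp hx0' ↑k⟩ with hσx
    have hmemS : σx ∈ S := by
      rw [hS, Finset.mem_filter]
      refine ⟨Finset.mem_univ _, ⟨codeMap w p x0 x, ?_, hxB⟩⟩
      exact codeMap_mem_cyl hsim hlam hp hc1 hc hVbdd hmaps hx0 hx0' n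
    refine Set.mem_biUnion hmemS ?_
    apply digits_subset_Ico hp n (wdFun σx)
    exact ⟨hxI, fun k => rfl⟩
  calc volume (((fun x : ℝ => codeMap w p x0 (max x 0)) ⁻¹' B) ∩ Set.Ico (0:ℝ) 1) ≤
      volume (⋃ σ ∈ S, Set.Ico ((wordVal p n (wdFun σ) : ℝ) / (Pr p n : ℝ))
        (((wordVal p n (wdFun σ) : ℝ) + 1) / (Pr p n : ℝ))) := measure_mono hsub
    _ ≤ ∑ σ ∈ S, volume (Set.Ico ((wordVal p n (wdFun σ) : ℝ) / (Pr p n : ℝ))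
        (((wordVal p n (wdFun σ) : ℝ) + 1) / (Pr p n : ℝ))) := measure_biUnion_finset_le _ _
    _ = ∑ σ ∈ S, ENNReal.ofReal (1 / (Pr p n : ℝ)) := by
        refine Finset.sum_congr rfl fun σ _ => volume_Ico_wordVal hp n (wdFun σ)
    _ = (S.card : ℝ≥0∞) * ENNReal.ofReal (1 / (Pr p n : ℝ)) := by
        rw [Finset.sum_const, nsmul_eq_mul]


variable {ρ : ℝ}

lemma card_level_succ
    (hsim : ∀ n i, i < p n → ∀ a b : Euc N, dist (w n i a) (w n i b) = lam n * dist a b)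
    (hlam : ∀ n, lam n ∈ Set.Ioo (0:ℝ) 1)
    (hmaps : ∀ n i, i < p n → w n i '' V ⊆ V)
    (m : ℕ) (B : Set (Euc N)) :
    (Finset.univ.filter (fun σ : Wd p (m+1) =>
      (compWord w (m+1) (wdFun σ) '' closure V ∩ B).Nonempty)).card ≤
    (Finset.univ.filter (fun τ : Wd p m =>
      (compWord w m (wdFun τ) '' closure V ∩ B).Nonempty)).card * p m := by
  set S := Finset.univ.filter (fun σ : Wd p (m+1) =>
      (compWord w (m+1) (wdFun σ) '' closure V ∩ B).Nonempty) with hSdef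
  set T := Finset.univ.filter (fun τ : Wd p m =>
      (compWord w m (wdFun τ) '' closure V ∩ B).Nonempty) with hTdef
  have hres : ∀ σ ∈ S, (fun k : Fin m => σ k.castSucc) ∈ T := by
    intro σ hσ
    rw [hSdef, Finset.mem_filter] at hσ
    rw [hTdef]; apply Finset.mem_filter.2
    refine ⟨Finset.mem_univ _, ?_⟩
    obtain ⟨y, hy1, hy2⟩ := hσ.2
    refine ⟨y, ?_, hy2⟩
    have hsub : compWord w (m+1) (wdFun σ) '' closure V ⊆
        compWord w m (wdFun (fun k : Fin m => σ k.castSucc)) '' closure V := by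
      rw [compWord_image_succ]
      refine Set.image_mono ?_
      exact hmaps_closure hsim hlam hmaps m _ ((σ (Fin.last m)).isLt)
    exact hsub hy1
  rw [Finset.card_eq_sum_card_fiberwise hres]
  have hfib : ∀ τ ∈ T, (S.filter (fun σ => (fun k : Fin m => σ k.castSucc) = τ)).card ≤ p m := by
    intro τ _
    have hinj : Set.InjOn (fun σ : Wd p (m+1) => σ (Fin.last m))
        ↑(S.filter (fun σ => (fun k : Fin m => σ k.castSucc) = τ)) := by
      intro σ hσ σ' hσ' hlast
      simp only [Finset.coe_filter, Set.mem_setOf_eq] at hσ hσ'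
      funext k
      induction k using Fin.lastCases with
      | last => exact hlast
      | cast j => exact (congrFun hσ.2 j).trans (congrFun hσ'.2 j).symm
    calc (S.filter (fun σ => (fun k : Fin m => σ k.castSucc) = τ)).card ≤
        (Finset.univ : Finset (Fin (p m))).card :=
          Finset.card_le_card_of_injOn _ (fun _ _ => Finset.mem_univ _) hinj
      _ = p m := by simp
  calc ∑ τ ∈ T, (S.filter (fun σ => (fun k : Fin m => σ k.castSucc) = τ)).card ≤
      ∑ _τ ∈ T, p m := Finset.sum_le_sum hfib
    _ = T.card * p m := by rw [Finset.sum_const, smul_eq_mul]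

lemma diam_closure_pos (hN : 0 < N) (hρ0 : 0 < ρ) (hball : Metric.ball x0 ρ ⊆ V)
    (hVbdd : Bornology.IsBounded V) : 0 < Metric.diam (closure V) := by
  set y : Euc N := x0 + EuclideanSpace.single ⟨0, hN⟩ (ρ/2) with hy
  have hdist : dist y x0 = ρ / 2 := by
    rw [hy, dist_eq_norm, add_sub_cancel_left, EuclideanSpace.norm_single,
      Real.norm_eq_abs, abs_of_pos (by linarith)]
  have hyV : y ∈ V := hball (by
    rw [Metric.mem_ball, hdist]; linarith)
  have hx0V : x0 ∈ V := hball (Metric.mem_ball_self hρ0)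
  have := Metric.dist_le_diam_of_mem hVbdd.closure (subset_closure hyV) (subset_closure hx0V)
  linarith [hdist ▸ this]

lemma card_meets_ball_le
    (hsim : ∀ n i, i < p n → ∀ a b : Euc N, dist (w n i a) (w n i b) = lam n * dist a b)
    (hlam : ∀ n, lam n ∈ Set.Ioo (0:ℝ) 1)
    (hmaps : ∀ n i, i < p n → w n i '' V ⊆ V)
    (hdisj : ∀ n i j, i < p n → j < p n → i ≠ j → Disjoint (w n i '' V) (w n j '' V))
    (hVbdd : Bornology.IsBounded V) (hN : 0 < N)
    (hρ0 : 0 < ρ) (hball : Metric.ball x0 ρ ⊆ V)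
    (m : ℕ) (z : Euc N) {r : ℝ} (hr : 0 < r)
    (hΛ : r ≤ Lam lam m * Metric.diam (closure V)) :
    ((Finset.univ.filter (fun τ : Wd p m =>
      (compWord w m (wdFun τ) '' closure V ∩ Metric.closedBall z r).Nonempty)).card : ℝ) ≤
      (2 * Metric.diam (closure V) / ρ) ^ N := by
  set DD := Metric.diam (closure V) with hDD
  have hΛm : 0 < Lam lam m := Lam_pos hlam m
  have hDD0 : 0 < DD := lt_of_lt_of_le (by positivity : (0:ℝ) < r / Lam lam m)
    (by rw [div_le_iff₀ hΛm]; linarith [hΛ])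
  set T := Finset.univ.filter (fun τ : Wd p m =>
      (compWord w m (wdFun τ) '' closure V ∩ Metric.closedBall z r).Nonempty) with hTdef
  set b : Wd p m → Set (Euc N) := fun τ =>
    Metric.ball (compWord w m (wdFun τ) x0) (Lam lam m * ρ) with hbdef
  have hsub_b : ∀ τ : Wd p m, b τ ⊆ compWord w m (wdFun τ) '' V := fun τ =>
    (ball_subset_image_of_dist_eq hΛm
      (compWord_dist hsim m (wdFun τ) (wdFun_lt τ)) x0 ρ).trans
      (Set.image_mono hball)
  have hdisj_b : (↑T : Set (Wd p m)).PairwiseDisjoint b := by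
    intro τ _ τ' _ hne
    exact ((compWord_disjoint hsim hlam hmaps hdisj m _ _ (wdFun_lt τ) (wdFun_lt τ')
      (fun h => hne (wdFun_injective h))).mono (hsub_b τ) (hsub_b τ'))
  have hb_in : ∀ τ ∈ T, b τ ⊆ Metric.closedBall z (2 * (Lam lam m * DD)) := by
    intro τ hτ
    rw [hTdef, Finset.mem_filter] at hτ
    obtain ⟨pt, hpt1, hpt2⟩ := hτ.2
    intro q hq
    have hqK : q ∈ compWord w m (wdFun τ) '' closure V :=
      Set.image_mono subset_closure (hsub_b τ hq)
    obtain ⟨a, haV, ha⟩ := hqK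
    obtain ⟨bb, hbV, hbb⟩ := hpt1
    have hdqp : dist q pt ≤ Lam lam m * DD := by
      rw [← ha, ← hbb, compWord_dist hsim m (wdFun τ) (wdFun_lt τ) a bb]
      exact mul_le_mul_of_nonneg_left (Metric.dist_le_diam_of_mem hVbdd.closure haV hbV) hΛm.le
    have hdpz : dist pt z ≤ r := Metric.mem_closedBall.1 hpt2
    rw [Metric.mem_closedBall]
    calc dist q z ≤ dist q pt + dist pt z := dist_triangle _ _ _
      _ ≤ Lam lam m * DD + r := add_le_add hdqp hdpz
      _ ≤ 2 * (Lam lam m * DD) := by linarith [hΛ]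
  haveI : Nontrivial (Euc N) :=
    ⟨0, EuclideanSpace.single ⟨0, hN⟩ 1, fun h => by
      have := congrArg norm h
      rw [norm_zero, EuclideanSpace.norm_single] at this
      norm_num at this⟩
  have hvol : (T.card : ℝ≥0∞) * (ENNReal.ofReal ((Lam lam m * ρ) ^ N) *
      volume (Metric.ball (0 : Euc N) 1)) ≤
      ENNReal.ofReal ((2 * (Lam lam m * DD)) ^ N) * volume (Metric.ball (0 : Euc N) 1) := by
    have hmeas : ∀ τ ∈ T, MeasurableSet (b τ) := fun τ _ => Metric.isOpen_ball.measurableSet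
    have h3 : ∀ τ : Wd p m, volume (b τ) =
        ENNReal.ofReal ((Lam lam m * ρ) ^ N) * volume (Metric.ball (0 : Euc N) 1) := by
      intro τ
      rw [hbdef]
      rw [Measure.addHaar_ball volume _ (by positivity : (0:ℝ) ≤ Lam lam m * ρ)]
      rw [finrank_euclideanSpace_fin]
    have h4 : volume (Metric.closedBall z (2 * (Lam lam m * DD))) =
        ENNReal.ofReal ((2 * (Lam lam m * DD)) ^ N) * volume (Metric.ball (0 : Euc N) 1) := by
      rw [Measure.addHaar_closedBall volume _ (by positivity)]
      rw [finrank_euclideanSpace_fin]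
    calc (T.card : ℝ≥0∞) * (ENNReal.ofReal ((Lam lam m * ρ) ^ N) *
        volume (Metric.ball (0 : Euc N) 1)) = ∑ τ ∈ T, volume (b τ) := by
          rw [Finset.sum_congr rfl (fun τ _ => h3 τ), Finset.sum_const, nsmul_eq_mul]
      _ = volume (⋃ τ ∈ T, b τ) := (measure_biUnion_finset hdisj_b hmeas).symm
      _ ≤ volume (Metric.closedBall z (2 * (Lam lam m * DD))) :=
          measure_mono (Set.iUnion₂_subset hb_in)
      _ = _ := h4
  have hball1 : volume (Metric.ball (0 : Euc N) 1) ≠ 0 :=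
    (Metric.measure_ball_pos _ _ one_pos).ne'
  have hball2 : volume (Metric.ball (0 : Euc N) 1) ≠ ⊤ := measure_ball_lt_top.ne
  rw [← mul_assoc] at hvol
  have hvol' := (ENNReal.mul_le_mul_iff_left hball1 hball2).1 hvol
  have hid : ENNReal.ofReal ((2 * (Lam lam m * DD)) ^ N) =
      ENNReal.ofReal ((2 * DD / ρ) ^ N) * ENNReal.ofReal ((Lam lam m * ρ) ^ N) := by
    rw [← ENNReal.ofReal_mul (by positivity), ← mul_pow]
    congr 2
    field_simp
  rw [hid] at hvol'
  have h5 := (ENNReal.mul_le_mul_iff_left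
    (ENNReal.ofReal_pos.2 (by positivity : (0:ℝ) < (Lam lam m * ρ) ^ N)).ne'
    ENNReal.ofReal_ne_top).1 hvol'
  rw [show ((T.card : ℝ≥0∞)) = ENNReal.ofReal ((T.card : ℝ)) from
    (ENNReal.ofReal_natCast _).symm] at h5
  exact (ENNReal.ofReal_le_ofReal_iff (by positivity)).1 h5


lemma natMeasure_closedBall_le
    (hsim : ∀ n i, i < p n → ∀ a b : Euc N, dist (w n i a) (w n i b) = lam n * dist a b)
    (hlam : ∀ n, lam n ∈ Set.Ioo (0:ℝ) 1) (hp : ∀ n, 2 ≤ p n)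
    (hc1 : c < 1) (hc : ∀ n, lam n ≤ c)
    (hVbdd : Bornology.IsBounded V)
    (hmaps : ∀ n i, i < p n → w n i '' V ⊆ V)
    (hdisj : ∀ n i j, i < p n → j < p n → i ≠ j → Disjoint (w n i '' V) (w n j '' V))
    (hN : 0 < N) (hρ0 : 0 < ρ) (hball : Metric.ball x0 ρ ⊆ V)
    {pm : ℕ} (hpbd : ∀ n, p n ≤ pm)
    {d : ℝ} (hd : 0 < d) {n₁ : ℕ}
    (hmoran : ∀ n, n₁ ≤ n → 1 ≤ (Pr p n : ℝ) * Lam lam n ^ d)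
    (z : Euc N) {r : ℝ} (hr : 0 < r)
    (hrε : r ≤ Lam lam (n₁+1) * Metric.diam (closure V)) :
    natMeasure w p x0 (Metric.closedBall z r) ≤
      ENNReal.ofReal (((2 * Metric.diam (closure V) / ρ) ^ N * pm /
        Metric.diam (closure V) ^ d) * r ^ d) := by
  have hx0 : x0 ∈ V := hball (Metric.mem_ball_self hρ0)
  set DD := Metric.diam (closure V) with hDDdef
  have hDD0 : 0 < DD := diam_closure_pos hN hρ0 hball hVbdd
  have hex : ∃ n, Lam lam n * DD ≤ r := by
    have h0 : (0:ℝ) < r / DD := by positivity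
    obtain ⟨n, hn⟩ := ((Lam_tendsto hlam hc1 hc).eventually_lt_const h0).exists
    exact ⟨n, by rw [← le_div_iff₀ hDD0]; exact hn.le⟩
  set n := Nat.find hex with hndef
  have hspec : Lam lam n * DD ≤ r := Nat.find_spec hex
  have hmin : ∀ j, j < n → ¬(Lam lam j * DD ≤ r) := fun j hj => Nat.find_min hex hj
  have hn₁ : n₁ < n := by
    by_contra hcon
    push_neg at hcon
    have h1 : Lam lam (n₁+1) < Lam lam n₁ := by
      rw [Lam_succ]
      nlinarith [Lam_pos hlam n₁, (hlam n₁).1, (hlam n₁).2]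
    have h2 : Lam lam n₁ ≤ Lam lam n := Lam_anti hlam hcon
    nlinarith [hspec, hrε]
  set m := n - 1 with hmdef
  have hm : n = m + 1 := by omega
  have hrm : r < Lam lam m * DD := by
    have := hmin m (by omega)
    linarith [not_le.1 this]
  have hcard1 := card_level_succ (V := V) hsim hlam hmaps m (Metric.closedBall z r)
  have hcard2 := card_meets_ball_le (V := V) hsim hlam hmaps hdisj hVbdd hN hρ0 hball m z hr hrm.le
  have hmass := natMeasure_le_card (V := V) hsim hlam hp hc1 hc hVbdd hmaps hx0
    (B := Metric.closedBall z r) (Metric.isClosed_closedBall.measurableSet) n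
  set S := Finset.univ.filter (fun σ : Wd p n =>
    (compWord w n (wdFun σ) '' closure V ∩ Metric.closedBall z r).Nonempty) with hSdef
  have hScard : (S.card : ℝ) ≤ (2 * DD / ρ) ^ N * pm := by
    have h1 : (S.card : ℝ) ≤ ((Finset.univ.filter (fun τ : Wd p m =>
        (compWord w m (wdFun τ) '' closure V ∩ Metric.closedBall z r).Nonempty)).card : ℝ) *
        (p m : ℝ) := by
      have := hcard1
      rw [← hm] at this
      exact_mod_cast this
    calc (S.card : ℝ) ≤ _ := h1
      _ ≤ (2 * DD / ρ) ^ N * pm := by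
        apply mul_le_mul hcard2 (by exact_mod_cast hpbd m) (by positivity) (by positivity)
  have hPrpos : (0:ℝ) < (Pr p n : ℝ) := by exact_mod_cast Pr_pos hp n
  have hinv : 1 / (Pr p n : ℝ) ≤ Lam lam n ^ d := by
    rw [div_le_iff₀ hPrpos]
    calc (1:ℝ) ≤ (Pr p n : ℝ) * Lam lam n ^ d := hmoran n (by omega)
      _ = Lam lam n ^ d * (Pr p n : ℝ) := mul_comm _ _
  have hΛr : Lam lam n ^ d ≤ (r / DD) ^ d := by
    apply Real.rpow_le_rpow (Lam_pos hlam n).le _ hd.le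
    rw [le_div_iff₀ hDD0]
    exact hspec
  calc natMeasure w p x0 (Metric.closedBall z r) ≤
      (S.card : ℝ≥0∞) * ENNReal.ofReal (1 / (Pr p n : ℝ)) := hmass
    _ = ENNReal.ofReal ((S.card : ℝ) * (1 / (Pr p n : ℝ))) := by
        rw [ENNReal.ofReal_mul (Nat.cast_nonneg _), ENNReal.ofReal_natCast]
    _ ≤ ENNReal.ofReal (((2 * DD / ρ) ^ N * pm / DD ^ d) * r ^ d) := by
        apply ENNReal.ofReal_le_ofReal
        have hstep : (S.card : ℝ) * (1 / (Pr p n : ℝ)) ≤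
            ((2 * DD / ρ) ^ N * pm) * (r / DD) ^ d := by
          apply mul_le_mul hScard (hinv.trans hΛr) (by positivity) (by positivity)
        calc (S.card : ℝ) * (1 / (Pr p n : ℝ)) ≤ _ := hstep
          _ = ((2 * DD / ρ) ^ N * pm / DD ^ d) * r ^ d := by
            rw [Real.div_rpow hr.le hDD0.le]
            field_simp

lemma hausdorffMeasure_limitSet_ne_zero
    (hsim : ∀ n i, i < p n → ∀ a b : Euc N, dist (w n i a) (w n i b) = lam n * dist a b)
    (hlam : ∀ n, lam n ∈ Set.Ioo (0:ℝ) 1) (hp : ∀ n, 2 ≤ p n)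
    (hc1 : c < 1) (hc : ∀ n, lam n ≤ c)
    (hVbdd : Bornology.IsBounded V)
    (hmaps : ∀ n i, i < p n → w n i '' V ⊆ V)
    (hdisj : ∀ n i j, i < p n → j < p n → i ≠ j → Disjoint (w n i '' V) (w n j '' V))
    (hN : 0 < N) (hρ0 : 0 < ρ) (hball : Metric.ball x0 ρ ⊆ V)
    {pm : ℕ} (hpbd : ∀ n, p n ≤ pm)
    {d : ℝ} (hd : 0 < d) {n₁ : ℕ}
    (hmoran : ∀ n, n₁ ≤ n → 1 ≤ (Pr p n : ℝ) * Lam lam n ^ d)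
    (hFmeas : MeasurableSet (limitSet w p (closure V))) :
    μH[d] (limitSet w p (closure V)) ≠ 0 := by
  have hx0 : x0 ∈ V := hball (Metric.mem_ball_self hρ0)
  set DD := Metric.diam (closure V) with hDDdef
  have hDD0 : 0 < DD := diam_closure_pos hN hρ0 hball hVbdd
  set Cst : ℝ := (2 * DD / ρ) ^ N * pm / DD ^ d with hCst
  have hpm1 : 1 ≤ pm := le_trans (by omega) (le_trans (hp 0) (hpbd 0))
  have hCst0 : 0 < Cst := by
    rw [hCst]
    have : (0:ℝ) < (pm : ℝ) := by exact_mod_cast lt_of_lt_of_le one_pos hpm1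
    positivity
  set C : ℝ≥0∞ := ENNReal.ofReal Cst with hC
  have hC0 : C ≠ 0 := (ENNReal.ofReal_pos.2 hCst0).ne'
  have hCtop : C ≠ ⊤ := ENNReal.ofReal_ne_top
  set ε' : ℝ := Lam lam (n₁+1) * DD with hε'
  have hε'0 : 0 < ε' := mul_pos (Lam_pos hlam _) hDD0
  set μ := natMeasure (N := N) w p x0 with hμ
  -- key: μ s ≤ C * ofReal (r ^ d) for s ⊆ closedBall z r, r ≤ ε'
  have hkey : ∀ z : Euc N, ∀ r : ℝ, 0 < r → r ≤ ε' →
      μ (Metric.closedBall z r) ≤ C * ENNReal.ofReal (r ^ d) := by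
    intro z r h1 h2
    calc μ (Metric.closedBall z r) ≤ ENNReal.ofReal (Cst * r ^ d) :=
        natMeasure_closedBall_le hsim hlam hp hc1 hc hVbdd hmaps hdisj hN hρ0 hball
          hpbd hd hmoran z h1 h2
      _ = C * ENNReal.ofReal (r ^ d) := by
        rw [hC, ← ENNReal.ofReal_mul hCst0.le]
  have hcancel : ∀ X : ℝ≥0∞, C⁻¹ * (C * X) = X := fun X => by
    rw [← mul_assoc, ENNReal.inv_mul_cancel hC0 hCtop, one_mul]
  have hmono : C⁻¹ • μ ≤ μH[d] := by
    apply Measure.le_hausdorffMeasure d _ (ENNReal.ofReal ε') (ENNReal.ofReal_pos.2 hε'0)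
    intro s hs
    rcases Set.eq_empty_or_nonempty s with rfl | ⟨z, hz⟩
    · simp
    rcases eq_or_ne (EMetric.diam s) 0 with hdiam | hdiam
    · have hss : s.Subsingleton := EMetric.diam_eq_zero_iff.1 hdiam
      have hq : (0:ℝ) < (1/2:ℝ) ^ d := Real.rpow_pos_of_pos (by norm_num) d
      have hq1 : ((1/2:ℝ)) ^ d < 1 := Real.rpow_lt_one (by norm_num) (by norm_num) hd
      have hμs : ∀ j : ℕ, (C⁻¹ • μ) s ≤ ENNReal.ofReal (ε' ^ d * ((1/2:ℝ) ^ d) ^ j) := by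
        intro j
        have hrj : 0 < ε' * (1/2:ℝ) ^ j := by positivity
        have hrj2 : ε' * (1/2:ℝ) ^ j ≤ ε' := by
          nlinarith [pow_le_one₀ (by norm_num : (0:ℝ) ≤ 1/2)
            (by norm_num : (1/2:ℝ) ≤ 1) (n := j), hε'0]
        have hsub : s ⊆ Metric.closedBall z (ε' * (1/2:ℝ) ^ j) := by
          intro y hy
          rw [hss hy hz]
          exact Metric.mem_closedBall_self hrj.le
        have hrw : (ε' * (1/2:ℝ) ^ j) ^ d = ε' ^ d * ((1/2:ℝ) ^ d) ^ j := by
          rw [Real.mul_rpow hε'0.le (by positivity)]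
          congr 1
          rw [← Real.rpow_natCast (1/2:ℝ) j, ← Real.rpow_natCast ((1/2:ℝ) ^ d) j,
            ← Real.rpow_mul (by norm_num), ← Real.rpow_mul (by norm_num)]
          congr 1
          ring
        calc (C⁻¹ • μ) s ≤ C⁻¹ * μ (Metric.closedBall z (ε' * (1/2:ℝ) ^ j)) := by
              rw [Measure.smul_apply, smul_eq_mul]
              exact mul_le_mul_right (measure_mono hsub) _
          _ ≤ C⁻¹ * (C * ENNReal.ofReal ((ε' * (1/2:ℝ) ^ j) ^ d)) :=
              mul_le_mul_right (hkey z _ hrj hrj2) _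
          _ = ENNReal.ofReal ((ε' * (1/2:ℝ) ^ j) ^ d) := hcancel _
          _ = ENNReal.ofReal (ε' ^ d * ((1/2:ℝ) ^ d) ^ j) := by rw [hrw]
      have hlim : Tendsto (fun j : ℕ => ENNReal.ofReal (ε' ^ d * ((1/2:ℝ) ^ d) ^ j))
          atTop (nhds 0) := by
        rw [show (0:ℝ≥0∞) = ENNReal.ofReal 0 by simp]
        apply ENNReal.tendsto_ofReal
        simpa using (tendsto_pow_atTop_nhds_zero_of_lt_one hq.le hq1).const_mul (ε' ^ d)
      have hzero : (C⁻¹ • μ) s ≤ 0 := ge_of_tendsto hlim (Eventually.of_forall hμs)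
      rw [show Metric.ediam s = 0 from hdiam, ENNReal.zero_rpow_of_pos hd]
      exact hzero
    · set r := (EMetric.diam s).toReal with hrdef
      have hdtop : EMetric.diam s ≠ ⊤ := (lt_of_le_of_lt hs ENNReal.ofReal_lt_top).ne
      have hr0 : 0 < r := ENNReal.toReal_pos hdiam hdtop
      have hrε : r ≤ ε' := by
        have := ENNReal.toReal_mono ENNReal.ofReal_ne_top hs
        rwa [ENNReal.toReal_ofReal hε'0.le] at this
      have hsub : s ⊆ Metric.closedBall z r := by
        intro y hy
        rw [Metric.mem_closedBall, dist_edist]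
        exact ENNReal.toReal_mono hdtop (EMetric.edist_le_diam_of_mem hy hz)
      calc (C⁻¹ • μ) s ≤ C⁻¹ * μ (Metric.closedBall z r) := by
            rw [Measure.smul_apply, smul_eq_mul]
            exact mul_le_mul_right (measure_mono hsub) _
        _ ≤ C⁻¹ * (C * ENNReal.ofReal (r ^ d)) := mul_le_mul_right (hkey z r hr0 hrε) _
        _ = ENNReal.ofReal (r ^ d) := hcancel _
        _ = EMetric.diam s ^ d := by
            rw [← ENNReal.ofReal_rpow_of_pos hr0, ENNReal.ofReal_toReal hdtop]
  have hle : (C⁻¹ • μ) (limitSet w p (closure V)) ≤ μH[d] (limitSet w p (closure V)) :=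
    Measure.le_iff.1 hmono _ hFmeas
  intro h0
  rw [h0] at hle
  have h1 : (C⁻¹ • μ) (limitSet w p (closure V)) = C⁻¹ := by
    rw [Measure.smul_apply, smul_eq_mul, hμ,
      natMeasure_limitSet hsim hlam hp hc1 hc hVbdd hmaps hx0, mul_one]
  rw [h1] at hle
  exact (ENNReal.inv_ne_zero.2 hCtop) (le_antisymm hle zero_le)


lemma dimH_le_of_freq
    (hsim : ∀ n i, i < p n → ∀ a b : Euc N, dist (w n i a) (w n i b) = lam n * dist a b)
    (hlam : ∀ n, lam n ∈ Set.Ioo (0:ℝ) 1) (hp : ∀ n, 2 ≤ p n)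
    (hc1 : c < 1) (hc : ∀ n, lam n ≤ c)
    (hVbdd : Bornology.IsBounded V)
    {d' : ℝ} (hd' : 0 ≤ d')
    (hfreq : ∃ᶠ n in atTop, (Pr p n : ℝ) * Lam lam n ^ d' ≤ 1) :
    dimH (limitSet w p (closure V)) ≤ ENNReal.ofReal d' := by
  set DD := Metric.diam (closure V) with hDDdef
  have hDnn : (0:ℝ) ≤ DD := Metric.diam_nonneg
  have hediam : EMetric.diam (closure V) = ENNReal.ofReal DD :=
    (ENNReal.ofReal_toReal hVbdd.closure.ediam_ne_top).symm
  have hcover : μH[d'] (limitSet w p (closure V)) ≤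
      liminf (fun n => ∑ σ : Wd p n,
        EMetric.diam (compWord w n (wdFun σ) '' closure V) ^ d') atTop := by
    apply Measure.hausdorffMeasure_le_liminf_sum d' _ (fun n => ENNReal.ofReal (Lam lam n * DD))
    · rw [show (0:ℝ≥0∞) = ENNReal.ofReal 0 by simp]
      apply ENNReal.tendsto_ofReal
      simpa using (Lam_tendsto hlam hc1 hc).mul_const DD
    · apply Eventually.of_forall
      intro n σ
      calc EMetric.diam (compWord w n (wdFun σ) '' closure V) ≤
          (Lam lam n).toNNReal * EMetric.diam (closure V) :=
            (compWord_lipschitz hsim hlam n _ (wdFun_lt σ)).ediam_image_le _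
        _ = ENNReal.ofReal (Lam lam n * DD) := by
            rw [hediam, ENNReal.ofReal_mul (Lam_pos hlam n).le]
            rfl
    · apply Eventually.of_forall
      intro n
      intro x hx
      have hx' := Set.mem_iInter.1 hx n
      rwa [level_eq n] at hx'
  have hbound : liminf (fun n => ∑ σ : Wd p n,
      EMetric.diam (compWord w n (wdFun σ) '' closure V) ^ d') atTop ≤
      ENNReal.ofReal (DD ^ d') := by
    apply liminf_le_of_frequently_le'
    refine hfreq.mono fun n hn => ?_
    have hterm : ∀ σ : Wd p n,
        EMetric.diam (compWord w n (wdFun σ) '' closure V) ^ d' ≤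
          ENNReal.ofReal ((Lam lam n * DD) ^ d') := by
      intro σ
      have h1 : EMetric.diam (compWord w n (wdFun σ) '' closure V) ≤
          ENNReal.ofReal (Lam lam n * DD) := by
        calc EMetric.diam (compWord w n (wdFun σ) '' closure V) ≤
            (Lam lam n).toNNReal * EMetric.diam (closure V) :=
              (compWord_lipschitz hsim hlam n _ (wdFun_lt σ)).ediam_image_le _
          _ = ENNReal.ofReal (Lam lam n * DD) := by
              rw [hediam, ENNReal.ofReal_mul (Lam_pos hlam n).le]
              rfl
      calc EMetric.diam (compWord w n (wdFun σ) '' closure V) ^ d' ≤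
          (ENNReal.ofReal (Lam lam n * DD)) ^ d' := ENNReal.rpow_le_rpow h1 hd'
        _ = ENNReal.ofReal ((Lam lam n * DD) ^ d') := by
            rw [← ENNReal.ofReal_rpow_of_nonneg (mul_nonneg (Lam_pos hlam n).le hDnn) hd']
    calc ∑ σ : Wd p n, EMetric.diam (compWord w n (wdFun σ) '' closure V) ^ d' ≤
        ∑ _σ : Wd p n, ENNReal.ofReal ((Lam lam n * DD) ^ d') :=
          Finset.sum_le_sum fun σ _ => hterm σ
      _ = (Pr p n : ℝ≥0∞) * ENNReal.ofReal ((Lam lam n * DD) ^ d') := by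
          rw [Finset.sum_const, Finset.card_univ, card_Wd, nsmul_eq_mul]
      _ = ENNReal.ofReal ((Pr p n : ℝ) * (Lam lam n * DD) ^ d') := by
          rw [ENNReal.ofReal_mul (by positivity), ENNReal.ofReal_natCast]
      _ ≤ ENNReal.ofReal (DD ^ d') := by
          apply ENNReal.ofReal_le_ofReal
          rw [Real.mul_rpow (Lam_pos hlam n).le hDnn, ← mul_assoc]
          have h2 : (0:ℝ) ≤ DD ^ d' := by positivity
          nlinarith [hn, h2]
  have hfin : μH[(d'.toNNReal : ℝ)] (limitSet w p (closure V)) ≠ ⊤ := by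
    rw [Real.coe_toNNReal _ hd']
    exact ((hcover.trans hbound).trans_lt ENNReal.ofReal_lt_top).ne
  have := dimH_le_of_hausdorffMeasure_ne_top hfin
  rwa [show ((d'.toNNReal : ℝ≥0∞)) = ENNReal.ofReal d' from rfl] at this


end

end S6


open scoped ENNReal NNReal in
open S6 in
/-- Hausdorff dimension of a translation limit fractal with the open set condition:
`dim_H F = liminf (log P_n)/(log 1/Λ_n)`. -/
theorem stmt6 {N : ℕ} (hN : 0 < N)
    (w : ℕ → ℕ → EuclideanSpace ℝ (Fin N) → EuclideanSpace ℝ (Fin N))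
    (p : ℕ → ℕ) (hp : ∀ n, 2 ≤ p n) (hpbd : ∃ pm, ∀ n, p n ≤ pm)
    (lam : ℕ → ℝ) (hlam : ∀ n, lam n ∈ Set.Ioo (0 : ℝ) 1)
    (hsup : ∃ c : ℝ, c < 1 ∧ ∀ n, lam n ≤ c)
    (hsim : ∀ n i, i < p n → ∀ a b, dist (w n i a) (w n i b) = lam n * dist a b)
    (V : Set (EuclideanSpace ℝ (Fin N)))
    (hVopen : IsOpen V) (hVbdd : Bornology.IsBounded V) (hVne : V.Nonempty)
    (hmaps : ∀ n i, i < p n → w n i '' V ⊆ V)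
    (hdisj : ∀ n i j, i < p n → j < p n → i ≠ j → Disjoint (w n i '' V) (w n j '' V))
    (hVreg : volume V = volume (closure V) ∧ V = interior (closure V)) :
    dimH (limitSet w p (closure V)) =
      ENNReal.ofReal (liminf (fun n =>
        Real.log (∏ i ∈ Finset.range n, (p i : ℝ)) /
          Real.log (1 / ∏ i ∈ Finset.range n, lam i)) atTop) := by
  obtain ⟨pm, hpbd⟩ := hpbd
  obtain ⟨c, hc1, hc⟩ := hsup
  obtain ⟨x0, hx0⟩ := hVne
  obtain ⟨ρ, hρ0, hball⟩ := Metric.isOpen_iff.1 hVopen x0 hx0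
  have hfun : (fun n => Real.log (∏ i ∈ Finset.range n, (p i : ℝ)) /
      Real.log (1 / ∏ i ∈ Finset.range n, lam i)) = fun n =>
      Real.log (Pr p n : ℝ) / Real.log (1 / Lam lam n) := by
    funext n
    congr 2
    rw [Pr]
    push_cast
    rfl
  rw [hfun]
  set aseq : ℕ → ℝ := fun n => Real.log (Pr p n : ℝ) / Real.log (1 / Lam lam n) with haseq
  set L := liminf aseq atTop with hLdef
  have hc0 : 0 < c := lt_of_lt_of_le (hlam 0).1 (hc 0)
  have hpm2 : 2 ≤ pm := le_trans (hp 0) (hpbd 0)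
  have hPrcast : ∀ n, (0:ℝ) < (Pr p n : ℝ) := fun n => by exact_mod_cast Pr_pos hp n
  have hPr1 : ∀ n, (1:ℝ) ≤ (Pr p n : ℝ) := fun n => by
    have := Pr_pos hp n; exact_mod_cast this
  have hnum : ∀ n, 0 ≤ Real.log (Pr p n : ℝ) := fun n => Real.log_nonneg (hPr1 n)
  have hden : ∀ n, 1 ≤ n → 0 < Real.log (1 / Lam lam n) := by
    intro n hn
    apply Real.log_pos
    rw [lt_div_iff₀ (Lam_pos hlam n), one_mul]
    calc Lam lam n ≤ c ^ n := Lam_le_pow hlam hc n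
      _ ≤ c ^ 1 := pow_le_pow_of_le_one hc0.le hc1.le hn
      _ = c := pow_one c
      _ < 1 := hc1
  have haseq0 : ∀ n, 0 ≤ aseq n := by
    intro n
    rcases Nat.eq_zero_or_pos n with rfl | hn
    · simp [haseq, Pr, Lam]
    · exact div_nonneg (hnum n) (hden n hn).le
  have hlogc : 0 < Real.log (1/c) :=
    Real.log_pos (by rw [lt_div_iff₀ hc0, one_mul]; exact hc1)
  have hlogpm : 0 < Real.log (pm : ℝ) :=
    Real.log_pos (by exact_mod_cast lt_of_lt_of_le one_lt_two hpm2)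
  have hKbd : ∀ n, 1 ≤ n → aseq n ≤ Real.log (pm : ℝ) / Real.log (1/c) := by
    intro n hn
    have h1 : Real.log (Pr p n : ℝ) ≤ (n : ℝ) * Real.log (pm : ℝ) := by
      have hPrle : (Pr p n : ℝ) ≤ (pm : ℝ) ^ n := by
        rw [Pr]
        push_cast
        calc ∏ i ∈ Finset.range n, (p i : ℝ) ≤ ∏ _i ∈ Finset.range n, (pm : ℝ) :=
            Finset.prod_le_prod (fun i _ => by positivity) (fun i _ => by exact_mod_cast hpbd i)
          _ = (pm : ℝ) ^ n := by rw [Finset.prod_const, Finset.card_range]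
      calc Real.log (Pr p n : ℝ) ≤ Real.log ((pm : ℝ) ^ n) :=
          (Real.log_le_log_iff (hPrcast n) (by positivity)).2 hPrle
        _ = (n : ℝ) * Real.log (pm : ℝ) := by rw [Real.log_pow]
    have h2 : (n : ℝ) * Real.log (1/c) ≤ Real.log (1 / Lam lam n) := by
      have hle : (1/c) ^ n ≤ 1 / Lam lam n := by
        rw [one_div, inv_pow, one_div]
        apply inv_anti₀ (Lam_pos hlam n)
        exact Lam_le_pow hlam hc n
      calc (n : ℝ) * Real.log (1/c) = Real.log ((1/c) ^ n) := by rw [Real.log_pow]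
        _ ≤ Real.log (1 / Lam lam n) :=
          (Real.log_le_log_iff (by positivity) (div_pos one_pos (Lam_pos hlam n))).2 hle
    show Real.log (Pr p n : ℝ) / Real.log (1 / Lam lam n) ≤ Real.log (pm : ℝ) / Real.log (1/c)
    rw [div_le_div_iff₀ (hden n hn) hlogc]
    calc Real.log (Pr p n : ℝ) * Real.log (1/c) ≤
        ((n : ℝ) * Real.log (pm : ℝ)) * Real.log (1/c) :=
          mul_le_mul_of_nonneg_right h1 hlogc.le
      _ = Real.log (pm : ℝ) * ((n : ℝ) * Real.log (1/c)) := by ring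
      _ ≤ Real.log (pm : ℝ) * Real.log (1 / Lam lam n) :=
          mul_le_mul_of_nonneg_left h2 hlogpm.le
  have hbdd_le : IsBoundedUnder (· ≤ ·) atTop aseq :=
    isBoundedUnder_of_eventually_le (a := Real.log (pm : ℝ) / Real.log (1/c))
      (by filter_upwards [eventually_ge_atTop 1] with n hn using hKbd n hn)
  have hbdd_ge : IsBoundedUnder (· ≥ ·) atTop aseq :=
    isBoundedUnder_of_eventually_ge (a := (0:ℝ)) (Eventually.of_forall haseq0)
  have hL0 : 0 ≤ L :=
    le_liminf_of_le hbdd_le.isCoboundedUnder_ge (Eventually.of_forall haseq0)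
  apply le_antisymm
  · -- upper bound
    have hub : ∀ d' : ℝ, L < d' → dimH (limitSet w p (closure V)) ≤ ENNReal.ofReal d' := by
      intro d' hd'
      set d'' := (L + d')/2 with hd''def
      have h1 : L < d'' := by rw [hd''def]; linarith
      have h2 : d'' < d' := by rw [hd''def]; linarith
      have h0'' : 0 ≤ d'' := by rw [hd''def]; linarith
      have hfreq0 : ∃ᶠ n in atTop, aseq n < d'' :=
        frequently_lt_of_liminf_lt hbdd_le.isCoboundedUnder_ge h1
      have hfreq : ∃ᶠ n in atTop, (Pr p n : ℝ) * Lam lam n ^ d' ≤ 1 := by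
        refine (hfreq0.and_eventually (eventually_ge_atTop 1)).mono ?_
        rintro n ⟨hn1, hn2⟩
        have hΛ := Lam_pos hlam n
        have hlogineq : Real.log (Pr p n : ℝ) < d'' * Real.log (1 / Lam lam n) :=
          (div_lt_iff₀ (hden n hn2)).1 hn1
        have hPrle : (Pr p n : ℝ) ≤ (1 / Lam lam n) ^ d'' := by
          rw [Real.rpow_def_of_pos (by positivity), ← Real.exp_log (hPrcast n)]
          exact Real.exp_le_exp.2 (by nlinarith [hlogineq])
        have hmul1 : (Pr p n : ℝ) * Lam lam n ^ d'' ≤ 1 := by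
          have hinv : (1 / Lam lam n) ^ d'' * Lam lam n ^ d'' = 1 := by
            rw [← Real.mul_rpow (by positivity) hΛ.le, one_div_mul_cancel hΛ.ne',
              Real.one_rpow]
          calc (Pr p n : ℝ) * Lam lam n ^ d'' ≤
              (1 / Lam lam n) ^ d'' * Lam lam n ^ d'' :=
                mul_le_mul_of_nonneg_right hPrle (Real.rpow_nonneg hΛ.le _)
            _ = 1 := hinv
        have hsplit : Lam lam n ^ d' = Lam lam n ^ d'' * Lam lam n ^ (d' - d'') := by
          rw [← Real.rpow_add hΛ, add_sub_cancel]
        calc (Pr p n : ℝ) * Lam lam n ^ d' =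
            ((Pr p n : ℝ) * Lam lam n ^ d'') * Lam lam n ^ (d' - d'') := by
              rw [hsplit]; ring
          _ ≤ 1 * 1 := mul_le_mul hmul1
              (Real.rpow_le_one hΛ.le (Lam_le_one hlam n) (by linarith))
              (Real.rpow_nonneg hΛ.le _)
              (by norm_num)
          _ = 1 := by norm_num
      exact dimH_le_of_freq hsim hlam hp hc1 hc hVbdd (by linarith) hfreq
    have htend : Tendsto (fun k : ℕ => ENNReal.ofReal (L + 1/(k+1))) atTop
        (nhds (ENNReal.ofReal L)) := by
      apply ENNReal.tendsto_ofReal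
      simpa using (tendsto_const_nhds (x := L)).add tendsto_one_div_add_atTop_nhds_zero_nat
    refine ge_of_tendsto htend (Eventually.of_forall fun k => hub _ ?_)
    have : (0:ℝ) < 1/((k:ℝ)+1) := by positivity
    linarith
  · -- lower bound
    rcases le_or_gt L 0 with hLneg | hLpos
    · rw [ENNReal.ofReal_eq_zero.2 hLneg]; exact zero_le
    apply ENNReal.le_of_forall_nnreal_lt
    intro rr hrr
    rcases eq_or_ne rr 0 with rfl | hrr0
    · simp
    have hd : 0 < (rr:ℝ) := by
      have := pos_iff_ne_zero.2 hrr0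
      exact_mod_cast this
    have hrL : (rr:ℝ) < L := by
      rw [show ENNReal.ofReal L = ((L.toNNReal : ℝ≥0) : ℝ≥0∞) from rfl] at hrr
      have h2 : rr < L.toNNReal := ENNReal.coe_lt_coe.1 hrr
      have h3 := NNReal.coe_lt_coe.2 h2
      rwa [Real.coe_toNNReal _ hLpos.le] at h3
    have hev : ∀ᶠ n in atTop, (rr:ℝ) < aseq n :=
      eventually_lt_of_lt_liminf hrL hbdd_ge
    obtain ⟨n₀, hn₀⟩ := eventually_atTop.1 (hev.and (eventually_ge_atTop 1))
    have hmoran : ∀ n, n₀ ≤ n → 1 ≤ (Pr p n : ℝ) * Lam lam n ^ (rr:ℝ) := by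
      intro n hn
      obtain ⟨ha, hb⟩ := hn₀ n hn
      have hΛ := Lam_pos hlam n
      have h' : (rr:ℝ) * Real.log (1 / Lam lam n) < Real.log (Pr p n : ℝ) :=
        (lt_div_iff₀ (hden n hb)).1 ha
      have h1 : (1 / Lam lam n) ^ (rr:ℝ) ≤ (Pr p n : ℝ) := by
        rw [Real.rpow_def_of_pos (by positivity), ← Real.exp_log (hPrcast n)]
        exact Real.exp_le_exp.2 (by nlinarith [h'])
      have h2 : (1 / Lam lam n) ^ (rr:ℝ) * Lam lam n ^ (rr:ℝ) = 1 := by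
        rw [← Real.mul_rpow (by positivity) hΛ.le, one_div_mul_cancel hΛ.ne',
          Real.one_rpow]
      calc (1:ℝ) = (1 / Lam lam n) ^ (rr:ℝ) * Lam lam n ^ (rr:ℝ) := h2.symm
        _ ≤ (Pr p n : ℝ) * Lam lam n ^ (rr:ℝ) :=
            mul_le_mul_of_nonneg_right h1 (Real.rpow_nonneg hΛ.le _)
    have hFmeas : MeasurableSet (limitSet w p (closure V)) :=
      (isClosed_limitSet hsim hlam hVbdd).measurableSet
    have hμ := hausdorffMeasure_limitSet_ne_zero hsim hlam hp hc1 hc hVbdd hmaps hdisj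
      hN hρ0 hball hpbd hd hmoran hFmeas
    exact le_dimH_of_hausdorffMeasure_ne_zero hμ
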